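/- Let b > 0 be a real number algebraic over ℚ such that no complex root of its minimal polynomial p over ℚ has modulus greater than b, let L ⊆ ℂ be the splitting field of p over ℚ, and let φ be a ℚ-algebra automorphism of L with |φ(b)| = b. Then φ permutes the set of roots of p of modulus exactly b: for every root β of p with |β| = b, one has |φ(β)| = b. -/

import Mathlib

theorem galois_automorphism_permutes_max_modulus_roots
    (b : ℝ) (hb : 0 < b) (halg : IsAlgebraic ℚ b)
    (hroots : ∀ z ∈ (minpoly ℚ b).rootSet ℂ, ‖z‖ ≤ b)
    (L : IntermediateField ℚ ℂ)
    (hL : L = IntermediateField.adjoin ℚ ((minpoly ℚ b).rootSet ℂ))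
    (φ : L ≃ₐ[ℚ] L)
    (hbL : ((b : ℂ)) ∈ L)
    (hφb : ‖((φ ⟨(b : ℂ), hbL⟩ : L) : ℂ)‖ = b) :
    ∀ (β : ℂ) (hβ : β ∈ L), β ∈ (minpoly ℚ b).rootSet ℂ → ‖β‖ = b →
      ‖((φ ⟨β, hβ⟩ : L) : ℂ)‖ = b := by
  intro β hβ hβroot hβabs
  set p := minpoly ℚ b with hp
  have hp0 : p ≠ 0 := minpoly.ne_zero halg.isIntegral
  have hsub : p.rootSet ℂ ⊆ L := by
    rw [hL]; exact IntermediateField.subset_adjoin ℚ _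
  -- conjugate of β is a root
  have hconj_root : (starRingEnd ℂ) β ∈ p.rootSet ℂ := by
    rw [Polynomial.mem_rootSet] at hβroot ⊢
    refine ⟨hp0, ?_⟩
    have h2 : Polynomial.aeval ((starRingEnd ℂ) β) p
        = (starRingEnd ℂ) (Polynomial.aeval β p) := by
      have := Polynomial.aeval_algHom_apply
        ((Complex.conjAe.toAlgHom).restrictScalars ℚ) β p
      simpa using this
    rw [h2, hβroot.2, map_zero]
  have hconjL : (starRingEnd ℂ) β ∈ L := hsub hconj_root
  -- key: φ sends roots (in L) to roots
  have key : ∀ (r : ℂ) (hrL : r ∈ L), r ∈ p.rootSet ℂ →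
      ((φ ⟨r, hrL⟩ : L) : ℂ) ∈ p.rootSet ℂ := by
    intro r hrL hr
    rw [Polynomial.mem_rootSet] at hr ⊢
    refine ⟨hp0, ?_⟩
    have h1 : Polynomial.aeval (⟨r, hrL⟩ : L) p = 0 := by
      have hinj : Function.Injective (algebraMap L ℂ) := (algebraMap L ℂ).injective
      apply hinj
      rw [map_zero, ← Polynomial.aeval_algebraMap_apply]
      exact hr.2
    have h2 : Polynomial.aeval (φ (⟨r, hrL⟩ : L)) p = 0 := by
      rw [Polynomial.aeval_algEquiv, AlgHom.comp_apply, h1, map_zero]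
    calc Polynomial.aeval ((φ (⟨r, hrL⟩ : L) : L) : ℂ) p
        = algebraMap L ℂ (Polynomial.aeval (φ (⟨r, hrL⟩ : L)) p) := by
          rw [← Polynomial.aeval_algebraMap_apply]; rfl
      _ = 0 := by rw [h2, map_zero]
  have hx := key β hβ hβroot
  have hy := key _ hconjL hconj_root
  have hxle : ‖((φ ⟨β, hβ⟩ : L) : ℂ)‖ ≤ b := hroots _ hx
  have hyle : ‖((φ ⟨(starRingEnd ℂ) β, hconjL⟩ : L) : ℂ)‖ ≤ b := hroots _ hy
  -- β * conj β = b^2 in L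
  have hmul : (⟨β, hβ⟩ : L) * ⟨(starRingEnd ℂ) β, hconjL⟩ = ⟨(b : ℂ), hbL⟩ ^ 2 := by
    apply Subtype.ext
    show β * (starRingEnd ℂ) β = ((b : ℂ)) ^ 2
    rw [Complex.mul_conj, ← Complex.sq_norm, hβabs]
    push_cast
    ring
  have hprod : ‖((φ ⟨β, hβ⟩ : L) : ℂ)‖
      * ‖((φ ⟨(starRingEnd ℂ) β, hconjL⟩ : L) : ℂ)‖ = b ^ 2 := by
    have : ((φ ⟨β, hβ⟩ : L) : ℂ) * ((φ ⟨(starRingEnd ℂ) β, hconjL⟩ : L) : ℂ)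
        = ((φ (⟨b, hbL⟩ ^ 2) : L) : ℂ) := by
      rw [← hmul, map_mul]; push_cast; ring
    rw [← norm_mul, this, map_pow]
    push_cast
    rw [norm_pow, hφb]
  nlinarith [norm_nonneg ((φ ⟨β, hβ⟩ : L) : ℂ)]
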